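/- For a block tridiagonal matrix in which every diagonal block is strictly diagonally dominant by rows with dominance factor exceeding the sum of the row sums of the adjacent off-diagonal blocks (i.e., the full matrix is strictly diagonally dominant by rows), the even-indexed diagonal blocks are invertible and the Schur complement produced by one step of cyclic reduction is again strictly diagonally dominant by rows. -/

import Mathlib

open Matrix Finset

def StrictlyRowDiagDominant {ι : Type*} [Fintype ι] [DecidableEq ι]
    (M : Matrix ι ι ℝ) : Prop :=
  ∀ i, ∑ j ∈ Finset.univ.erase i, |M i j| < |M i i|

lemma schur_sdd {ι κ : Type*} [Fintype ι] [DecidableEq ι] [Fintype κ] [DecidableEq κ]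
    (P : Matrix ι ι ℝ) (Q : Matrix ι κ ℝ) (R : Matrix κ ι ℝ) (T : Matrix κ κ ℝ)
    (h1 : ∀ k, (∑ l ∈ Finset.univ.erase k, |P k l|) + ∑ j, |Q k j| < |P k k|)
    (h2 : ∀ i, (∑ k, |R i k|) + ∑ j ∈ Finset.univ.erase i, |T i j| < |T i i|) :
    StrictlyRowDiagDominant (T - R * P⁻¹ * Q) := by
  have hPdet : P.det ≠ 0 := by
    apply det_ne_zero_of_sum_row_lt_diag
    intro k
    simp only [Real.norm_eq_abs]
    refine lt_of_le_of_lt ?_ (h1 k)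
    exact le_add_of_nonneg_right (Finset.sum_nonneg fun j _ => abs_nonneg _)
  have hPinv : P⁻¹ * P = 1 := nonsing_inv_mul P (isUnit_iff_ne_zero.mpr hPdet)
  intro i
  set a : ι → ℝ := R i with ha_def
  set c : ι → ℝ := a ᵥ* P⁻¹ with hc_def
  have hca : ∀ k, a k = ∑ l, c l * P l k := by
    intro k
    have hc : c ᵥ* P = a := by
      rw [hc_def, Matrix.vecMul_vecMul, hPinv, Matrix.vecMul_one]
    calc a k = (c ᵥ* P) k := by rw [hc]
    _ = ∑ l, c l * P l k := by simp [Matrix.vecMul, dotProduct]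
  set w : κ → ℝ := fun j => ∑ k, c k * Q k j with hw_def
  have hSw : ∀ j, (T - R * P⁻¹ * Q) i j = T i j - w j := by
    intro j
    simp [Matrix.sub_apply, Matrix.mul_apply, hw_def, hc_def, ha_def,
      Matrix.vecMul, dotProduct]
  have swap : ∑ k, ∑ l ∈ Finset.univ.erase k, |c k| * |P k l|
      = ∑ k, ∑ l ∈ Finset.univ.erase k, |c l| * |P l k| := by
    refine Finset.sum_comm' ?_
    intro x y
    simp only [Finset.mem_univ, Finset.mem_erase, true_and, and_true, ne_eq]
    exact ⟨fun h => fun h' => h h'.symm, fun h => fun h' => h h'.symm⟩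
  have pointwise : ∀ k, |c k| * |P k k| - ∑ l ∈ Finset.univ.erase k, |c l| * |P l k| ≤ |a k| := by
    intro k
    have hsplit : a k = c k * P k k + ∑ l ∈ Finset.univ.erase k, c l * P l k := by
      rw [hca k, ← Finset.add_sum_erase _ _ (Finset.mem_univ k)]
    have habs : |c k * P k k| ≤ |a k| + ∑ l ∈ Finset.univ.erase k, |c l * P l k| := by
      have h1' : c k * P k k = a k - ∑ l ∈ Finset.univ.erase k, c l * P l k := by
        rw [hsplit]; ring
      rw [h1']
      refine (abs_sub _ _).trans ?_
      exact add_le_add_right (Finset.abs_sum_le_sum_abs _ _) _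
    simp only [abs_mul] at habs ⊢
    linarith
  have key : ∑ k, |c k| * (∑ j, |Q k j|) ≤ ∑ k, |a k| := by
    calc ∑ k, |c k| * (∑ j, |Q k j|)
        ≤ ∑ k, |c k| * (|P k k| - ∑ l ∈ Finset.univ.erase k, |P k l|) := by
          refine Finset.sum_le_sum fun k _ => ?_
          exact mul_le_mul_of_nonneg_left (by linarith [h1 k]) (abs_nonneg _)
      _ = ∑ k, (|c k| * |P k k| - ∑ l ∈ Finset.univ.erase k, |c k| * |P k l|) := by
          refine Finset.sum_congr rfl fun k _ => ?_
          rw [mul_sub, Finset.mul_sum]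
      _ = (∑ k, |c k| * |P k k|) - ∑ k, ∑ l ∈ Finset.univ.erase k, |c k| * |P k l| :=
          Finset.sum_sub_distrib _ _
      _ = (∑ k, |c k| * |P k k|) - ∑ k, ∑ l ∈ Finset.univ.erase k, |c l| * |P l k| := by
          rw [swap]
      _ = ∑ k, (|c k| * |P k k| - ∑ l ∈ Finset.univ.erase k, |c l| * |P l k|) :=
          (Finset.sum_sub_distrib _ _).symm
      _ ≤ ∑ k, |a k| := Finset.sum_le_sum fun k _ => pointwise k
  have hw_bound : ∑ j, |w j| ≤ ∑ k, |a k| := by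
    refine le_trans ?_ key
    calc ∑ j, |w j| ≤ ∑ j, ∑ k, |c k| * |Q k j| := by
          refine Finset.sum_le_sum fun j _ => ?_
          refine (Finset.abs_sum_le_sum_abs _ _).trans_eq ?_
          simp [abs_mul]
      _ = ∑ k, ∑ j, |c k| * |Q k j| := Finset.sum_comm
      _ = ∑ k, |c k| * (∑ j, |Q k j|) := by
          refine Finset.sum_congr rfl fun k _ => ?_
          rw [Finset.mul_sum]
  have herase : ∑ j ∈ Finset.univ.erase i, |w j| = (∑ j, |w j|) - |w i| :=
    Finset.sum_erase_eq_sub (Finset.mem_univ i)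
  have hdiag : |T i i| - |w i| ≤ |(T - R * P⁻¹ * Q) i i| := by
    rw [hSw i]
    exact abs_sub_abs_le_abs_sub _ _
  have hoff : ∑ j ∈ Finset.univ.erase i, |(T - R * P⁻¹ * Q) i j|
      ≤ (∑ j ∈ Finset.univ.erase i, |T i j|) + ∑ j ∈ Finset.univ.erase i, |w j| := by
    rw [← Finset.sum_add_distrib]
    refine Finset.sum_le_sum fun j _ => ?_
    rw [hSw j]
    exact abs_sub _ _
  have h2i := h2 i
  linarith

def phi1 {m s : ℕ} (k : Fin m × Fin s) : Fin (2*m) × Fin s :=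
  (⟨2*(k.1:ℕ), by have := k.1.isLt; omega⟩, k.2)

def phi2 {m s : ℕ} (k : Fin m × Fin s) : Fin (2*m) × Fin s :=
  (⟨2*(k.1:ℕ)+1, by have := k.1.isLt; omega⟩, k.2)

lemma phi1_inj {m s : ℕ} : Function.Injective (phi1 (m:=m) (s:=s)) := by
  intro k l h
  simp only [phi1, Prod.mk.injEq, Fin.mk.injEq] at h
  exact Prod.ext (Fin.ext (by omega)) h.2

lemma phi2_inj {m s : ℕ} : Function.Injective (phi2 (m:=m) (s:=s)) := by
  intro k l h
  simp only [phi2, Prod.mk.injEq, Fin.mk.injEq] at h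
  exact Prod.ext (Fin.ext (by omega)) h.2

lemma phi1_ne_phi2 {m s : ℕ} (k l : Fin m × Fin s) : phi1 k ≠ phi2 l := by
  simp only [phi1, phi2, ne_eq, Prod.mk.injEq, Fin.mk.injEq, not_and]
  intro h; omega


theorem cyclic_reduction_preserves_diag_dominance
    (m s : ℕ) (D E F : ℕ → Matrix (Fin s) (Fin s) ℝ)
    (hE0 : E 0 = 0) (hEtop : ∀ j, 2 * m ≤ j → E j = 0)
    (hFtop : ∀ j, 2 * m - 1 ≤ j → F j = 0)
    (A : Matrix (Fin (2 * m) × Fin s) (Fin (2 * m) × Fin s) ℝ)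
    (hA : A = fun p q =>
      if p.1 = q.1 then D (p.1 : ℕ) p.2 q.2
      else if (p.1 : ℕ) = (q.1 : ℕ) + 1 then E (p.1 : ℕ) p.2 q.2
      else if (q.1 : ℕ) = (p.1 : ℕ) + 1 then F (p.1 : ℕ) p.2 q.2 else 0)
    (hSDD : StrictlyRowDiagDominant A)
    (A11 A12 A21 A22 : Matrix (Fin m × Fin s) (Fin m × Fin s) ℝ)
    (hA11 : A11 = fun p q => if p.1 = q.1 then D (2 * (p.1 : ℕ)) p.2 q.2 else 0)
    (hA12 : A12 = fun p q =>
      if p.1 = q.1 then F (2 * (p.1 : ℕ)) p.2 q.2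
      else if (p.1 : ℕ) = (q.1 : ℕ) + 1 then E (2 * (p.1 : ℕ)) p.2 q.2 else 0)
    (hA21 : A21 = fun p q =>
      if p.1 = q.1 then E (2 * (p.1 : ℕ) + 1) p.2 q.2
      else if (q.1 : ℕ) = (p.1 : ℕ) + 1 then F (2 * (p.1 : ℕ) + 1) p.2 q.2 else 0)
    (hA22 : A22 = fun p q => if p.1 = q.1 then D (2 * (p.1 : ℕ) + 1) p.2 q.2 else 0) :
    (∀ i : Fin m, IsUnit (D (2 * (i : ℕ)))) ∧
      StrictlyRowDiagDominant (A22 - A21 * A11⁻¹ * A12) := by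
  have e11 : ∀ k l : Fin m × Fin s, A11 k l = A (phi1 k) (phi1 l) := by
    rintro ⟨i,x⟩ ⟨i',y⟩
    rw [hA11, hA]
    dsimp only [phi1, phi2]
    simp only [phi1, phi1, Fin.ext_iff, Fin.val_mk]
    split_ifs <;> first | rfl | (exfalso; omega) | simp_all
  have e12 : ∀ k l : Fin m × Fin s, A12 k l = A (phi1 k) (phi2 l) := by
    rintro ⟨i,x⟩ ⟨i',y⟩
    rw [hA12, hA]
    dsimp only [phi1, phi2]
    simp only [phi1, phi2, Fin.ext_iff, Fin.val_mk]
    split_ifs <;> first | rfl | (exfalso; omega) | simp_all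
  have e21 : ∀ k l : Fin m × Fin s, A21 k l = A (phi2 k) (phi1 l) := by
    rintro ⟨i,x⟩ ⟨i',y⟩
    rw [hA21, hA]
    dsimp only [phi1, phi2]
    simp only [phi2, phi1, Fin.ext_iff, Fin.val_mk]
    split_ifs <;> first | rfl | (exfalso; omega) | simp_all
  have e22 : ∀ k l : Fin m × Fin s, A22 k l = A (phi2 k) (phi2 l) := by
    rintro ⟨i,x⟩ ⟨i',y⟩
    rw [hA22, hA]
    dsimp only [phi1, phi2]
    simp only [phi2, phi2, Fin.ext_iff, Fin.val_mk]
    split_ifs <;> first | rfl | (exfalso; omega) | simp_all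
  -- row dominance for the (odd, even) rows, translated to blocks
  have h1 : ∀ k : Fin m × Fin s,
      (∑ l ∈ Finset.univ.erase k, |A11 k l|) + ∑ j, |A12 k j| < |A11 k k| := by
    intro k
    have hdisj : Disjoint ((Finset.univ.erase k).image phi1) (Finset.univ.image phi2) := by
      rw [Finset.disjoint_left]
      rintro q hq1 hq2
      simp only [Finset.mem_image] at hq1 hq2
      obtain ⟨l, -, rfl⟩ := hq1
      obtain ⟨j, -, hj⟩ := hq2
      exact phi1_ne_phi2 l j hj.symm
    have hsub : ((Finset.univ.erase k).image phi1) ∪ Finset.univ.image phi2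
        ⊆ Finset.univ.erase (phi1 k) := by
      intro q hq
      simp only [Finset.mem_union, Finset.mem_image, Finset.mem_erase, Finset.mem_univ,
        true_and, and_true] at hq ⊢
      rcases hq with ⟨l, hl, rfl⟩ | ⟨j, -, rfl⟩
      · exact fun h => hl (phi1_inj h)
      · exact fun h => phi1_ne_phi2 k j h.symm
    calc (∑ l ∈ Finset.univ.erase k, |A11 k l|) + ∑ j, |A12 k j|
        = (∑ q ∈ (Finset.univ.erase k).image phi1, |A (phi1 k) q|)
            + ∑ q ∈ Finset.univ.image phi2, |A (phi1 k) q| := by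
          rw [Finset.sum_image (fun a _ b _ h => phi1_inj h),
            Finset.sum_image (fun a _ b _ h => phi2_inj h)]
          congr 1
          · exact Finset.sum_congr rfl fun l _ => by rw [e11]
          · exact Finset.sum_congr rfl fun j _ => by rw [e12]
      _ = ∑ q ∈ ((Finset.univ.erase k).image phi1) ∪ Finset.univ.image phi2,
            |A (phi1 k) q| := (Finset.sum_union hdisj).symm
      _ ≤ ∑ q ∈ Finset.univ.erase (phi1 k), |A (phi1 k) q| :=
          Finset.sum_le_sum_of_subset_of_nonneg hsub (fun _ _ _ => abs_nonneg _)
      _ < |A (phi1 k) (phi1 k)| := hSDD (phi1 k)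
      _ = |A11 k k| := by rw [e11]
  have h2 : ∀ i : Fin m × Fin s,
      (∑ l, |A21 i l|) + ∑ j ∈ Finset.univ.erase i, |A22 i j| < |A22 i i| := by
    intro i
    have hdisj : Disjoint (Finset.univ.image phi1) ((Finset.univ.erase i).image phi2) := by
      rw [Finset.disjoint_left]
      rintro q hq1 hq2
      simp only [Finset.mem_image] at hq1 hq2
      obtain ⟨l, -, rfl⟩ := hq1
      obtain ⟨j, -, hj⟩ := hq2
      exact phi1_ne_phi2 l j hj.symm
    have hsub : (Finset.univ.image phi1) ∪ ((Finset.univ.erase i).image phi2)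
        ⊆ Finset.univ.erase (phi2 i) := by
      intro q hq
      simp only [Finset.mem_union, Finset.mem_image, Finset.mem_erase, Finset.mem_univ,
        true_and, and_true] at hq ⊢
      rcases hq with ⟨l, -, rfl⟩ | ⟨j, hj, rfl⟩
      · exact phi1_ne_phi2 l i
      · exact fun h => hj (phi2_inj h)
    calc (∑ l, |A21 i l|) + ∑ j ∈ Finset.univ.erase i, |A22 i j|
        = (∑ q ∈ Finset.univ.image phi1, |A (phi2 i) q|)
            + ∑ q ∈ (Finset.univ.erase i).image phi2, |A (phi2 i) q| := by
          rw [Finset.sum_image (fun a _ b _ h => phi1_inj h),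
            Finset.sum_image (fun a _ b _ h => phi2_inj h)]
          congr 1
          · exact Finset.sum_congr rfl fun l _ => by rw [e21]
          · exact Finset.sum_congr rfl fun j _ => by rw [e22]
      _ = ∑ q ∈ (Finset.univ.image phi1) ∪ ((Finset.univ.erase i).image phi2),
            |A (phi2 i) q| := (Finset.sum_union hdisj).symm
      _ ≤ ∑ q ∈ Finset.univ.erase (phi2 i), |A (phi2 i) q| :=
          Finset.sum_le_sum_of_subset_of_nonneg hsub (fun _ _ _ => abs_nonneg _)
      _ < |A (phi2 i) (phi2 i)| := hSDD (phi2 i)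
      _ = |A22 i i| := by rw [e22]
  refine ⟨?_, schur_sdd A11 A12 A21 A22 h1 h2⟩
  intro i
  have hD : ∀ x y : Fin s, D (2 * (i : ℕ)) x y = A11 (i, x) (i, y) := by
    intro x y; rw [hA11]; simp
  have hsdd : ∀ x : Fin s,
      ∑ y ∈ Finset.univ.erase x, |D (2 * (i : ℕ)) x y| < |D (2 * (i : ℕ)) x x| := by
    intro x
    have hinj : ∀ a ∈ Finset.univ.erase x, ∀ b ∈ Finset.univ.erase x,
        ((i, a) : Fin m × Fin s) = (i, b) → a = b := by
      intro a _ b _ h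
      exact (Prod.mk.injEq _ _ _ _ ▸ h).2
    have hsub : (Finset.univ.erase x).image (fun y => ((i, y) : Fin m × Fin s))
        ⊆ Finset.univ.erase (i, x) := by
      intro q hq
      simp only [Finset.mem_image, Finset.mem_erase, Finset.mem_univ, true_and,
        and_true] at hq ⊢
      obtain ⟨y, hy, rfl⟩ := hq
      simp only [ne_eq, Prod.mk.injEq, not_and]
      exact fun _ => hy
    calc ∑ y ∈ Finset.univ.erase x, |D (2 * (i : ℕ)) x y|
        = ∑ q ∈ (Finset.univ.erase x).image (fun y => ((i, y) : Fin m × Fin s)),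
            |A11 (i, x) q| := by
          rw [Finset.sum_image hinj]
          exact Finset.sum_congr rfl fun y _ => by rw [hD]
      _ ≤ ∑ l ∈ Finset.univ.erase (i, x), |A11 (i, x) l| :=
          Finset.sum_le_sum_of_subset_of_nonneg hsub (fun _ _ _ => abs_nonneg _)
      _ < |A11 (i, x) (i, x)| := by
          have := h1 (i, x)
          have hnn : (0:ℝ) ≤ ∑ j, |A12 (i, x) j| :=
            Finset.sum_nonneg fun j _ => abs_nonneg _
          linarith
      _ = |D (2 * (i : ℕ)) x x| := by rw [hD]
  refine (Matrix.isUnit_iff_isUnit_det _).mpr (isUnit_iff_ne_zero.mpr ?_)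
  apply det_ne_zero_of_sum_row_lt_diag
  intro x
  simpa [Real.norm_eq_abs] using hsdd x
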